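/- Let p be a prime and n ≥ 2. The kernel of the canonical group epimorphism π_n : G_{n+1} → G_n has order p^{β_p(n+1)}. -/

import Mathlib

/-- `α_p(n)`: the `p`-adic valuation of `n!`. -/
def alphaP (p n : ℕ) : ℕ := padicValNat p (Nat.factorial n)

/-- `β_p(n)`: the least `m` with `α_p(m) ≥ n`. -/
noncomputable def betaP (p n : ℕ) : ℕ := sInf {m | n ≤ alphaP p m}

namespace CardKerAux

open Polynomial Finset

variable {p : ℕ}

theorem alpha_mono (hp : p.Prime) {k m : ℕ} (h : k ≤ m) : alphaP p k ≤ alphaP p m := by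
  haveI : Fact p.Prime := ⟨hp⟩
  have h1 : p ^ alphaP p k ∣ Nat.factorial m :=
    dvd_trans pow_padicValNat_dvd (Nat.factorial_dvd_factorial h)
  exact (padicValNat_dvd_iff_le (Nat.factorial_ne_zero m)).mp h1

theorem alpha_pow_ge (hp : p.Prime) {n : ℕ} (hn : 2 ≤ n) : n + 1 ≤ alphaP p (p ^ n) := by
  haveI : Fact p.Prime := ⟨hp⟩
  have hp1 : 1 < p := hp.one_lt
  have hpn : p + 1 ≤ p ^ n := by
    calc p + 1 ≤ p * p := by nlinarith
    _ ≤ p ^ n := by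
      calc p * p = p ^ 2 := (sq p).symm
      _ ≤ p ^ n := Nat.pow_le_pow_right hp.pos hn
  have hfac : Nat.factorial (p ^ n) = p ^ n * Nat.factorial (p ^ n - 1) := by
    have : p ^ n = (p ^ n - 1) + 1 := by omega
    rw [this, Nat.factorial_succ, ← this]
  have h2 : alphaP p (p ^ n) = padicValNat p (p ^ n) + padicValNat p (Nat.factorial (p ^ n - 1)) := by
    rw [alphaP, hfac, padicValNat.mul (by positivity) (Nat.factorial_ne_zero _)]
  rw [h2, padicValNat.prime_pow]
  have h3 : 1 ≤ padicValNat p (Nat.factorial (p ^ n - 1)) := by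
    apply one_le_padicValNat_of_dvd (Nat.factorial_ne_zero _)
    exact Nat.dvd_factorial hp.pos (by omega)
  omega

theorem beta_le (hp : p.Prime) {n : ℕ} (hn : 2 ≤ n) : betaP p (n + 1) ≤ p ^ n :=
  Nat.sInf_le (alpha_pow_ge hp hn)

theorem alpha_lt_beta {n k : ℕ} (hk : k < betaP p (n + 1)) : alphaP p k ≤ n := by
  have := Nat.notMem_of_lt_sInf hk
  simp only [Set.mem_setOf_eq, not_le] at this
  omega

theorem alpha_ge_beta (hp : p.Prime) {n : ℕ} (hn : 2 ≤ n) {k : ℕ} (hk : betaP p (n + 1) ≤ k) :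
    n + 1 ≤ alphaP p k := by
  have hne : {m | n + 1 ≤ alphaP p m}.Nonempty := ⟨p ^ n, alpha_pow_ge hp hn⟩
  have hmem : betaP p (n + 1) ∈ {m | n + 1 ≤ alphaP p m} :=
    Nat.sInf_mem (s := {m | n + 1 ≤ alphaP p m}) hne
  exact le_trans hmem (alpha_mono hp hk)

theorem pow_alpha_dvd_descFactorial (x k : ℕ) :
    (p : ℤ) ^ alphaP p k ∣ (x.descFactorial k : ℤ) := by
  have h1 : p ^ alphaP p k ∣ Nat.factorial k := pow_padicValNat_dvd
  have h2 : Nat.factorial k ∣ x.descFactorial k := Nat.factorial_dvd_descFactorial x k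
  exact_mod_cast Int.natCast_dvd_natCast.mpr (dvd_trans h1 h2)

theorem factorial_decomp (hp : p.Prime) (k : ℕ) :
    ∃ u : ℕ, Nat.factorial k = p ^ alphaP p k * u ∧ ¬ p ∣ u := by
  haveI : Fact p.Prime := ⟨hp⟩
  obtain ⟨u, hu⟩ := (pow_padicValNat_dvd : p ^ alphaP p k ∣ Nat.factorial k)
  refine ⟨u, hu, fun hdvd => ?_⟩
  obtain ⟨v, hv⟩ := hdvd
  refine pow_succ_padicValNat_not_dvd (p := p) (Nat.factorial_ne_zero k) ⟨v, ?_⟩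
  conv_lhs => rw [hu, hv]
  ring

theorem dvd_choose_mul_pow (hp : p.Prime) {n : ℕ} {t i : ℕ} (hi0 : 0 < i) (hin : i < p ^ n) :
    p ∣ (t * p ^ n).choose i := by
  haveI : Fact p.Prime := ⟨hp⟩
  set m := t * p ^ n with hm
  rcases lt_or_ge m i with h | h
  · rw [Nat.choose_eq_zero_of_lt h]; exact dvd_zero p
  · have hm1 : 1 ≤ m := le_trans hi0 h
    have key : m * (m - 1).choose (i - 1) = m.choose i * i := by
      have h5 := Nat.add_one_mul_choose_eq (m - 1) (i - 1)
      try simp only [Nat.succ_eq_add_one] at h5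
      rwa [Nat.sub_add_cancel hm1, Nat.sub_add_cancel hi0] at h5
    have hdvd : p ^ n ∣ m.choose i * i := by
      rw [← key]; exact dvd_mul_of_dvd_left (dvd_mul_left (p ^ n) t) _
    have hC0' : m.choose i ≠ 0 := (Nat.choose_pos h).ne'
    have hi0' : i ≠ 0 := hi0.ne'
    have hval : n ≤ padicValNat p (m.choose i) + padicValNat p i := by
      rw [← padicValNat.mul hC0' hi0']
      exact (padicValNat_dvd_iff_le (by positivity)).mp hdvd
    have hvi : padicValNat p i < n := by
      by_contra hc
      push_neg at hc
      have : p ^ n ∣ i := dvd_trans (pow_dvd_pow p hc) pow_padicValNat_dvd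
      exact absurd (Nat.le_of_dvd hi0 this) (not_le.mpr hin)
    have : 1 ≤ padicValNat p (m.choose i) := by omega
    exact dvd_trans (dvd_pow_self p one_ne_zero) (dvd_trans (pow_dvd_pow p this) pow_padicValNat_dvd)

theorem key_shift_descFactorial (hp : p.Prime) {n : ℕ} (x t k : ℕ) (hk : k < p ^ n) :
    (p : ℤ) ^ (alphaP p k + 1) ∣
      ((x + t * p ^ n).descFactorial k : ℤ) - (x.descFactorial k : ℤ) := by
  have hmem : ((k, 0) : ℕ × ℕ) ∈ Finset.HasAntidiagonal.antidiagonal k := by simp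
  have hvdm := Nat.add_choose_eq x (t * p ^ n) k
  rw [← Finset.add_sum_erase _ _ hmem] at hvdm
  simp only [Nat.choose_zero_right, mul_one, Nat.choose_self] at hvdm
  have hps : p ∣ ∑ ij ∈ (Finset.HasAntidiagonal.antidiagonal k).erase (k, 0),
      x.choose ij.1 * (t * p ^ n).choose ij.2 := by
    apply Finset.dvd_sum
    intro ij hij
    have h1 := Finset.mem_erase.mp hij
    have h2 : ij.1 + ij.2 = k := Finset.HasAntidiagonal.mem_antidiagonal.mp h1.2
    have h3 : ij.2 ≠ 0 := by
      intro h0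
      exact h1.1 (Prod.ext (by omega) h0)
    exact Dvd.dvd.mul_left (dvd_choose_mul_pow hp (Nat.pos_of_ne_zero h3) (by omega)) _
  obtain ⟨s, hs⟩ := hps
  obtain ⟨u, hu, hpu⟩ := factorial_decomp hp k
  rw [Nat.descFactorial_eq_factorial_mul_choose, Nat.descFactorial_eq_factorial_mul_choose, hvdm]
  push_cast [hs, hu]
  refine ⟨(u : ℤ) * s, ?_⟩
  ring

theorem exists_descPochhammer_rep : ∀ (d : ℕ) (g : Polynomial ℤ), g.natDegree ≤ d →
    ∃ a : ℕ → ℤ, g = ∑ k ∈ range (d + 1), C (a k) * descPochhammer ℤ k := by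
  intro d
  induction d with
  | zero =>
    intro g hg
    refine ⟨fun _ => g.coeff 0, ?_⟩
    rw [eq_C_of_natDegree_le_zero hg]
    simp [descPochhammer_zero]
  | succ d ih =>
    intro g hg
    set c := g.coeff (d + 1) with hc
    set h := g - C c * descPochhammer ℤ (d + 1) with hh
    have hdp_deg : (descPochhammer ℤ (d + 1)).natDegree = d + 1 := descPochhammer_natDegree ℤ (d + 1)
    have hdp_monic : (descPochhammer ℤ (d + 1)).Monic := monic_descPochhammer ℤ (d + 1)
    have hhdeg : h.natDegree ≤ d := by
      rw [natDegree_le_iff_coeff_eq_zero]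
      intro N hN
      rw [hh, coeff_sub, coeff_C_mul]
      rcases eq_or_lt_of_le (Nat.succ_le_of_lt hN) with hEq | hLt
      · rw [← hEq]
        have : (descPochhammer ℤ (d + 1)).coeff (d + 1) = 1 := by
          have := hdp_monic.coeff_natDegree
          rwa [hdp_deg] at this
        rw [this, mul_one, ← hc]
        ring
      · have h1 : g.coeff N = 0 := coeff_eq_zero_of_natDegree_lt (lt_of_le_of_lt hg hLt)
        have h2 : (descPochhammer ℤ (d + 1)).coeff N = 0 :=
          coeff_eq_zero_of_natDegree_lt (by omega)
        rw [h1, h2, mul_zero, sub_zero]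
    obtain ⟨a, ha⟩ := ih h hhdeg
    refine ⟨Function.update a (d + 1) c, ?_⟩
    rw [Finset.sum_range_succ, Function.update_self]
    have hsum : ∑ k ∈ range (d + 1), C (Function.update a (d + 1) c k) * descPochhammer ℤ k
        = ∑ k ∈ range (d + 1), C (a k) * descPochhammer ℤ k := by
      apply Finset.sum_congr rfl
      intro k hk
      have hne : k ≠ d + 1 := by have := Finset.mem_range.mp hk; omega
      rw [Function.update_of_ne hne]
    rw [hsum, ← ha, hh]
    ring

theorem val_coeff (hp : p.Prime) {n N : ℕ} (a : ℕ → ℤ)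
    (h : ∀ m : ℕ, (p : ℤ) ^ n ∣ ∑ k ∈ range N, a k * (m.descFactorial k : ℤ)) :
    ∀ k, k < N → (p : ℤ) ^ (n - alphaP p k) ∣ a k := by
  intro k
  induction k using Nat.strong_induction_on with
  | _ k ih =>
    intro hk
    have hsplit : ∑ j ∈ range (k + 1), a j * ((k : ℕ).descFactorial j : ℤ)
        = ∑ j ∈ range N, a j * (k.descFactorial j : ℤ) := by
      apply Finset.sum_subset (Finset.range_subset_range.mpr hk)
      intro j _ hj
      have : k < j := by have := Finset.mem_range.not.mp hj; omega
      rw [Nat.descFactorial_eq_zero_iff_lt.mpr this]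
      simp
    have hsum : (p : ℤ) ^ n ∣ ∑ j ∈ range (k + 1), a j * (k.descFactorial j : ℤ) := by
      rw [hsplit]; exact h k
    rw [Finset.sum_range_succ, Nat.descFactorial_self] at hsum
    have hearly : (p : ℤ) ^ n ∣ ∑ j ∈ range k, a j * (k.descFactorial j : ℤ) := by
      apply Finset.dvd_sum
      intro j hj
      have hjk : j < k := Finset.mem_range.mp hj
      obtain ⟨cj, hcj⟩ := ih j hjk (lt_trans hjk hk)
      obtain ⟨dj, hdj⟩ := pow_alpha_dvd_descFactorial (p := p) k j
      rw [hcj, hdj]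
      refine dvd_trans (pow_dvd_pow (p : ℤ) (by omega : n ≤ (n - alphaP p j) + alphaP p j))
        ⟨cj * dj, ?_⟩
      rw [pow_add]; ring
    have hfk : (p : ℤ) ^ n ∣ a k * (Nat.factorial k : ℤ) := (dvd_add_right hearly).mp hsum
    rcases le_or_gt n (alphaP p k) with hcase | hcase
    · rw [Nat.sub_eq_zero_of_le hcase, pow_zero]; exact one_dvd _
    · obtain ⟨u, hu, hpu⟩ := factorial_decomp hp k
      have hp0 : ((p : ℤ) ^ alphaP p k) ≠ 0 := by
        have := hp.pos; positivity
      have hstep : (p : ℤ) ^ (n - alphaP p k) * (p : ℤ) ^ alphaP p k ∣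
          (a k * u) * (p : ℤ) ^ alphaP p k := by
        rw [← pow_add]
        have hexp : n - alphaP p k + alphaP p k = n := by omega
        rw [hexp]
        have : a k * (Nat.factorial k : ℤ) = a k * u * (p : ℤ) ^ alphaP p k := by
          rw [hu]; push_cast; ring
        rwa [this] at hfk
      have hdvd2 : (p : ℤ) ^ (n - alphaP p k) ∣ a k * u :=
        (mul_dvd_mul_iff_right hp0).mp hstep
      have hcop : IsCoprime ((p : ℤ) ^ (n - alphaP p k)) (u : ℤ) := by
        apply IsCoprime.pow_left
        exact Nat.isCoprime_iff_coprime.mpr (hp.coprime_iff_not_dvd.mpr hpu)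
      exact hcop.dvd_of_dvd_mul_right hdvd2

/-- The canonical polynomial attached to a coefficient vector. -/
noncomputable def PB (p n b : ℕ) (a : ℕ → ℤ) : Polynomial ℤ :=
  X + ∑ k ∈ range b, C (a k * (p : ℤ) ^ (n - alphaP p k)) * descPochhammer ℤ k

theorem PB_eval_nat (p n b : ℕ) (a : ℕ → ℤ) (m : ℕ) :
    (PB p n b a).eval (m : ℤ) =
      (m : ℤ) + ∑ k ∈ range b, a k * (p : ℤ) ^ (n - alphaP p k) * (m.descFactorial k : ℤ) := by
  rw [PB, eval_add, eval_X, eval_finset_sum]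
  congr 1
  apply Finset.sum_congr rfl
  intro k _
  rw [eval_mul, eval_C, descPochhammer_eval_eq_descFactorial]

theorem aeval_natCast_zmod (N : ℕ) (f : Polynomial ℤ) (m : ℕ) :
    Polynomial.aeval ((m : ZMod N)) f = ((f.eval (m : ℤ) : ℤ) : ZMod N) := by
  have h1 : ((m : ZMod N)) = algebraMap ℤ (ZMod N) (m : ℤ) := by push_cast; simp
  rw [h1, Polynomial.aeval_algebraMap_apply]
  simp [Polynomial.aeval_def, Polynomial.eval₂_eq_eval_map]

theorem eq_on_zmod {N : ℕ} [NeZero N] {f g : Polynomial ℤ}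
    (h : ∀ m : ℕ, (N : ℤ) ∣ f.eval (m : ℤ) - g.eval (m : ℤ)) :
    ∀ x : ZMod N, Polynomial.aeval x f = Polynomial.aeval x g := by
  intro x
  have hx : ((x.val : ℕ) : ZMod N) = x := ZMod.natCast_rightInverse x
  rw [← hx, aeval_natCast_zmod, aeval_natCast_zmod]
  have h2 := (ZMod.intCast_zmod_eq_zero_iff_dvd _ N).mpr (h x.val)
  push_cast at h2
  rwa [sub_eq_zero] at h2

theorem PB_id_mod (p n b : ℕ) (a : ℕ → ℤ) (m : ℕ) :
    (p : ℤ) ^ n ∣ (PB p n b a).eval (m : ℤ) - (m : ℤ) := by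
  rw [PB_eval_nat, add_sub_cancel_left]
  apply Finset.dvd_sum
  intro k _
  obtain ⟨d, hd⟩ := pow_alpha_dvd_descFactorial (p := p) m k
  rw [hd]
  refine dvd_trans (pow_dvd_pow (p : ℤ) (by omega : n ≤ (n - alphaP p k) + alphaP p k))
    ⟨a k * d, ?_⟩
  rw [pow_add]; ring

theorem PB_shift (hp : p.Prime) {n b : ℕ} (hb : ∀ k < b, alphaP p k ≤ n)
    (hbpn : b ≤ p ^ n) (a : ℕ → ℤ) (x t : ℕ) :
    (p : ℤ) ^ (n + 1) ∣
      (PB p n b a).eval ((x + t * p ^ n : ℕ) : ℤ) - (PB p n b a).eval (x : ℤ)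
        - (t : ℤ) * (p : ℤ) ^ n := by
  rw [PB_eval_nat, PB_eval_nat]
  have heq : ((x + t * p ^ n : ℕ) : ℤ)
        + (∑ k ∈ range b, a k * (p : ℤ) ^ (n - alphaP p k) * ((x + t * p ^ n).descFactorial k : ℤ))
      - ((x : ℤ) + ∑ k ∈ range b, a k * (p : ℤ) ^ (n - alphaP p k) * (x.descFactorial k : ℤ))
      - (t : ℤ) * (p : ℤ) ^ n
      = ∑ k ∈ range b, a k * (p : ℤ) ^ (n - alphaP p k) *
          (((x + t * p ^ n).descFactorial k : ℤ) - (x.descFactorial k : ℤ)) := by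
    have h1 : ∑ k ∈ range b, a k * (p : ℤ) ^ (n - alphaP p k) *
          (((x + t * p ^ n).descFactorial k : ℤ) - (x.descFactorial k : ℤ))
        = ∑ k ∈ range b, (a k * (p : ℤ) ^ (n - alphaP p k) * ((x + t * p ^ n).descFactorial k : ℤ)
            - a k * (p : ℤ) ^ (n - alphaP p k) * (x.descFactorial k : ℤ)) :=
      Finset.sum_congr rfl fun k _ => by ring
    rw [h1, Finset.sum_sub_distrib]
    push_cast
    ring
  rw [heq]
  apply Finset.dvd_sum
  intro k hk
  have hkb : k < b := Finset.mem_range.mp hk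
  obtain ⟨d, hd⟩ := key_shift_descFactorial hp x t k (lt_of_lt_of_le hkb hbpn)
  rw [hd]
  have hαk : alphaP p k ≤ n := hb k hkb
  refine dvd_trans (pow_dvd_pow (p : ℤ)
    (by omega : n + 1 ≤ (n - alphaP p k) + (alphaP p k + 1))) ⟨a k * d, ?_⟩
  rw [pow_add]; ring

theorem PB_mod_p {n b : ℕ} (hb : ∀ k < b, alphaP p k ≤ n)
    (a a' : ℕ → ℤ) (h : ∀ k < b, (p : ℤ) ∣ a k - a' k) (m : ℕ) :
    (p : ℤ) ^ (n + 1) ∣ (PB p n b a).eval (m : ℤ) - (PB p n b a').eval (m : ℤ) := by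
  rw [PB_eval_nat, PB_eval_nat]
  have heq : (m : ℤ) + (∑ k ∈ range b, a k * (p : ℤ) ^ (n - alphaP p k) * (m.descFactorial k : ℤ))
      - ((m : ℤ) + ∑ k ∈ range b, a' k * (p : ℤ) ^ (n - alphaP p k) * (m.descFactorial k : ℤ))
      = ∑ k ∈ range b, (a k - a' k) * (p : ℤ) ^ (n - alphaP p k) * (m.descFactorial k : ℤ) := by
    have h1 : ∑ k ∈ range b, (a k - a' k) * (p : ℤ) ^ (n - alphaP p k) * (m.descFactorial k : ℤ)
        = ∑ k ∈ range b, (a k * (p : ℤ) ^ (n - alphaP p k) * (m.descFactorial k : ℤ)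
            - a' k * (p : ℤ) ^ (n - alphaP p k) * (m.descFactorial k : ℤ)) :=
      Finset.sum_congr rfl fun k _ => by ring
    rw [h1, Finset.sum_sub_distrib]
    ring
  rw [heq]
  apply Finset.dvd_sum
  intro k hk
  have hkb : k < b := Finset.mem_range.mp hk
  obtain ⟨c, hc⟩ := h k hkb
  obtain ⟨d, hd⟩ := pow_alpha_dvd_descFactorial (p := p) m k
  rw [hc, hd]
  have hαk : alphaP p k ≤ n := hb k hkb
  refine dvd_trans (pow_dvd_pow (p : ℤ)
    (by omega : n + 1 ≤ 1 + (n - alphaP p k) + alphaP p k)) ⟨c * d, ?_⟩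
  rw [pow_add, pow_add]; ring

end CardKerAux

open CardKerAux Polynomial Finset

/-- For `n ≥ 2`, the kernel of the canonical epimorphism
`π_n : G_{n+1} → G_n` (from polynomial permutations of `ℤ/p^{n+1}ℤ` onto
polynomial permutations of `ℤ/p^nℤ`) has order `p^{β_p(n+1)}`: the kernel
consists of those polynomial permutations of `ℤ/p^{n+1}ℤ` that are induced
by a polynomial which induces the identity on `ℤ/p^nℤ`. -/
theorem card_ker_canonical_projection (p : ℕ) (hp : p.Prime) (n : ℕ) (hn : 2 ≤ n) :
    Nat.card {σ : ZMod (p ^ (n + 1)) → ZMod (p ^ (n + 1)) //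
        Function.Bijective σ ∧
        ∃ f : Polynomial ℤ,
          (σ = fun x => Polynomial.aeval x f) ∧
          ∀ x : ZMod (p ^ n), Polynomial.aeval x f = x} =
      p ^ betaP p (n + 1) := by
  haveI : Fact p.Prime := ⟨hp⟩
  haveI : NeZero p := ⟨hp.ne_zero⟩
  haveI : NeZero (p ^ n) := ⟨pow_ne_zero _ hp.ne_zero⟩
  haveI : NeZero (p ^ (n + 1)) := ⟨pow_ne_zero _ hp.ne_zero⟩
  set β := betaP p (n + 1) with hβdef
  have hα : ∀ k < β, alphaP p k ≤ n := fun k hk => alpha_lt_beta hk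
  have hβpn : β ≤ p ^ n := beta_le hp hn
  set lift : (Fin β → ZMod p) → (ℕ → ℤ) :=
    fun b k => if h : k < β then ((b ⟨k, h⟩).val : ℤ) else 0 with hlift
  -- the identity modulo p^n
  have hID : ∀ (a : ℕ → ℤ) (w : ZMod (p ^ n)), Polynomial.aeval w (PB p n β a) = w := by
    intro a w
    have h := eq_on_zmod (N := p ^ n) (f := PB p n β a) (g := X) (fun m => by
      rw [eval_X]
      have := PB_id_mod p n β a m
      push_cast
      exact this) w
    rwa [aeval_X] at h
  -- the shift property modulo p^(n+1)
  have hshift : ∀ (a : ℕ → ℤ) (x t : ℕ),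
      Polynomial.aeval (((x + t * p ^ n : ℕ)) : ZMod (p ^ (n + 1))) (PB p n β a)
        = Polynomial.aeval ((x : ℕ) : ZMod (p ^ (n + 1))) (PB p n β a)
          + ((t * p ^ n : ℕ) : ZMod (p ^ (n + 1))) := by
    intro a x t
    rw [aeval_natCast_zmod, aeval_natCast_zmod]
    have h1 := PB_shift hp hα hβpn a x t
    have h2 : (((PB p n β a).eval ((x + t * p ^ n : ℕ) : ℤ)
        - ((PB p n β a).eval (x : ℤ) + (t : ℤ) * (p : ℤ) ^ n) : ℤ) : ZMod (p ^ (n + 1))) = 0 := by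
      apply (ZMod.intCast_zmod_eq_zero_iff_dvd _ _).mpr
      have hcast : ((p ^ (n + 1) : ℕ) : ℤ) = (p : ℤ) ^ (n + 1) := by push_cast; ring
      rw [hcast, ← sub_sub]
      exact h1
    rw [Int.cast_sub, sub_eq_zero, Int.cast_add] at h2
    rw [h2]
    congr 1
    push_cast
    ring
  -- injectivity (hence bijectivity) of the induced map
  have hinj : ∀ a : ℕ → ℤ,
      Function.Injective (fun x : ZMod (p ^ (n + 1)) => Polynomial.aeval x (PB p n β a)) := by
    intro a x y hxy
    simp only [] at hxy
    set π := ZMod.castHom (pow_dvd_pow p (Nat.le_succ n)) (ZMod (p ^ n)) with hπdef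
    have hπ : ∀ z : ZMod (p ^ (n + 1)), π (Polynomial.aeval z (PB p n β a)) = π z := by
      intro z
      have h1 : π (Polynomial.aeval z (PB p n β a))
          = Polynomial.aeval (π z) (PB p n β a) :=
        (Polynomial.aeval_algHom_apply π.toIntAlgHom z (PB p n β a)).symm
      rw [h1, hID]
    have hproj : (x.val : ZMod (p ^ n)) = (y.val : ZMod (p ^ n)) := by
      have h1 := hπ x
      have h2 := hπ y
      have h3 : π x = π y := by rw [← h1, ← h2, hxy]
      rw [show (x : ZMod (p ^ (n+1))) = ((x.val : ℕ) : ZMod (p ^ (n+1))) from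
          (ZMod.natCast_rightInverse x).symm,
        show (y : ZMod (p ^ (n+1))) = ((y.val : ℕ) : ZMod (p ^ (n+1))) from
          (ZMod.natCast_rightInverse y).symm, map_natCast, map_natCast] at h3
      exact h3
    have hmod : x.val % p ^ n = y.val % p ^ n := (ZMod.natCast_eq_natCast_iff _ _ _).mp hproj
    set q := x.val % p ^ n with hq
    set s := x.val / p ^ n with hs
    set t := y.val / p ^ n with ht
    have hxval : q + s * p ^ n = x.val := Nat.mod_add_div' x.val (p ^ n)
    have hyval : q + t * p ^ n = y.val := by
      rw [hmod]; exact Nat.mod_add_div' y.val (p ^ n)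
    have hxcast : x = ((q + s * p ^ n : ℕ) : ZMod (p ^ (n + 1))) := by
      rw [hxval]; exact (ZMod.natCast_rightInverse x).symm
    have hycast : y = ((q + t * p ^ n : ℕ) : ZMod (p ^ (n + 1))) := by
      rw [hyval]; exact (ZMod.natCast_rightInverse y).symm
    rw [hxcast, hycast, hshift a q s, hshift a q t] at hxy
    have hsp : ((s * p ^ n : ℕ) : ZMod (p ^ (n + 1))) = ((t * p ^ n : ℕ) : ZMod (p ^ (n + 1))) :=
      add_left_cancel hxy
    have hmodeq : s * p ^ n % p ^ (n + 1) = t * p ^ n % p ^ (n + 1) :=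
      (ZMod.natCast_eq_natCast_iff _ _ _).mp hsp
    have hslt : s < p := by
      have hv : x.val < p ^ n * p := by rw [← pow_succ]; exact ZMod.val_lt x
      exact Nat.div_lt_of_lt_mul (by rw [mul_comm] at hv ⊢; exact hv)
    have htlt : t < p := by
      have hv : y.val < p ^ n * p := by rw [← pow_succ]; exact ZMod.val_lt y
      exact Nat.div_lt_of_lt_mul (by rw [mul_comm] at hv ⊢; exact hv)
    have hs1 : s * p ^ n < p ^ (n + 1) := by
      rw [pow_succ, mul_comm (p ^ n) p]
      exact Nat.mul_lt_mul_of_lt_of_le hslt (le_refl _) (pow_pos hp.pos n)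
    have ht1 : t * p ^ n < p ^ (n + 1) := by
      rw [pow_succ, mul_comm (p ^ n) p]
      exact Nat.mul_lt_mul_of_lt_of_le htlt (le_refl _) (pow_pos hp.pos n)
    have hst : s * p ^ n = t * p ^ n := by
      rwa [Nat.mod_eq_of_lt hs1, Nat.mod_eq_of_lt ht1] at hmodeq
    have hsteq : s = t := Nat.eq_of_mul_eq_mul_right (pow_pos hp.pos n) hst
    rw [hxcast, hycast]
    exact congrArg (fun z : ℕ => ((z : ℕ) : ZMod (p ^ (n + 1)))) (by rw [hsteq])
  have hbij : ∀ a : ℕ → ℤ,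
      Function.Bijective (fun x : ZMod (p ^ (n + 1)) => Polynomial.aeval x (PB p n β a)) :=
    fun a => Finite.injective_iff_bijective.mp (hinj a)
  -- the bijection
  set e : (Fin β → ZMod p) → {σ : ZMod (p ^ (n + 1)) → ZMod (p ^ (n + 1)) //
      Function.Bijective σ ∧
      ∃ f : Polynomial ℤ, (σ = fun x => Polynomial.aeval x f) ∧
        ∀ x : ZMod (p ^ n), Polynomial.aeval x f = x} :=
    fun b => ⟨fun x => Polynomial.aeval x (PB p n β (lift b)),
      hbij (lift b), PB p n β (lift b), rfl, hID (lift b)⟩ with he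
  have einj : Function.Injective e := by
    intro b b' hbb
    have hfun : ∀ x : ZMod (p ^ (n + 1)),
        Polynomial.aeval x (PB p n β (lift b)) = Polynomial.aeval x (PB p n β (lift b')) :=
      fun x => congrFun (congrArg Subtype.val hbb) x
    have hdvd : ∀ m : ℕ, (p : ℤ) ^ (n + 1) ∣
        ∑ k ∈ range β, ((lift b k - lift b' k) * (p : ℤ) ^ (n - alphaP p k))
          * (m.descFactorial k : ℤ) := by
      intro m
      have h1 := hfun ((m : ZMod (p ^ (n + 1))))
      rw [aeval_natCast_zmod, aeval_natCast_zmod] at h1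
      have h2 : ((p ^ (n + 1) : ℕ) : ℤ) ∣
          (PB p n β (lift b)).eval (m : ℤ) - (PB p n β (lift b')).eval (m : ℤ) := by
        apply (ZMod.intCast_zmod_eq_zero_iff_dvd _ _).mp
        rw [Int.cast_sub, h1, sub_self]
      push_cast at h2
      rw [PB_eval_nat, PB_eval_nat] at h2
      have heq : (m : ℤ) + (∑ k ∈ range β, lift b k * (p : ℤ) ^ (n - alphaP p k) * (m.descFactorial k : ℤ))
          - ((m : ℤ) + ∑ k ∈ range β, lift b' k * (p : ℤ) ^ (n - alphaP p k) * (m.descFactorial k : ℤ))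
          = ∑ k ∈ range β, ((lift b k - lift b' k) * (p : ℤ) ^ (n - alphaP p k))
              * (m.descFactorial k : ℤ) := by
        have h3 : ∑ k ∈ range β, ((lift b k - lift b' k) * (p : ℤ) ^ (n - alphaP p k))
              * (m.descFactorial k : ℤ)
            = ∑ k ∈ range β, (lift b k * (p : ℤ) ^ (n - alphaP p k) * (m.descFactorial k : ℤ)
                - lift b' k * (p : ℤ) ^ (n - alphaP p k) * (m.descFactorial k : ℤ)) :=
          Finset.sum_congr rfl fun k _ => by ring
        rw [h3, Finset.sum_sub_distrib]
        ring
      rw [← heq]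
      exact h2
    have hvc := val_coeff hp (n := n + 1) (N := β)
      (fun k => (lift b k - lift b' k) * (p : ℤ) ^ (n - alphaP p k)) hdvd
    funext k
    have hk : (p : ℤ) ^ (n + 1 - alphaP p (k : ℕ)) ∣
        (lift b (k : ℕ) - lift b' (k : ℕ)) * (p : ℤ) ^ (n - alphaP p (k : ℕ)) := hvc k k.isLt
    have hαk : alphaP p (k : ℕ) ≤ n := hα k k.isLt
    have hexp : (n + 1) - alphaP p (k : ℕ) = (n - alphaP p (k : ℕ)) + 1 := by omega
    rw [hexp] at hk
    obtain ⟨c, hc⟩ := hk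
    have hpne : ((p : ℤ) ^ (n - alphaP p (k : ℕ))) ≠ 0 := by
      have := hp.pos; positivity
    have hpc : lift b (k : ℕ) - lift b' (k : ℕ) = p * c := by
      have h4 : (lift b (k : ℕ) - lift b' (k : ℕ)) * (p : ℤ) ^ (n - alphaP p (k : ℕ))
          = (p * c) * (p : ℤ) ^ (n - alphaP p (k : ℕ)) := by
        rw [hc, pow_succ]
        ring
      exact mul_right_cancel₀ hpne h4
    have hlb : lift b (k : ℕ) = ((b k).val : ℤ) := by
      rw [hlift]
      simp only [k.isLt, dif_pos, Fin.eta]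
    have hlb' : lift b' (k : ℕ) = ((b' k).val : ℤ) := by
      rw [hlift]
      simp only [k.isLt, dif_pos, Fin.eta]
    have h5 : ((((b k).val : ℤ) - ((b' k).val : ℤ) : ℤ) : ZMod p) = 0 := by
      apply (ZMod.intCast_zmod_eq_zero_iff_dvd _ _).mpr
      rw [← hlb, ← hlb', hpc]
      exact ⟨c, by ring⟩
    push_cast at h5
    rw [sub_eq_zero] at h5
    rw [ZMod.natCast_rightInverse (b k), ZMod.natCast_rightInverse (b' k)] at h5
    exact h5
  have esurj : Function.Surjective e := by
    rintro ⟨σ, hbijσ, f, hσf, hid⟩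
    set g := f - X with hg
    set d := max g.natDegree β with hd
    obtain ⟨a, ha⟩ := exists_descPochhammer_rep d g (le_max_left _ _)
    have hEvalg : ∀ m : ℕ, g.eval (m : ℤ) = ∑ k ∈ range (d + 1), a k * (m.descFactorial k : ℤ) := by
      intro m
      conv_lhs => rw [ha]
      rw [eval_finset_sum]
      apply Finset.sum_congr rfl
      intro k _
      rw [eval_mul, eval_C, descPochhammer_eval_eq_descFactorial]
    have hfg : ∀ m : ℕ, f.eval (m : ℤ) = g.eval (m : ℤ) + (m : ℤ) := by
      intro m
      rw [hg, eval_sub, eval_X]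
      ring
    have hdvd : ∀ m : ℕ, (p : ℤ) ^ n ∣ ∑ k ∈ range (d + 1), a k * (m.descFactorial k : ℤ) := by
      intro m
      rw [← hEvalg]
      have h1 := hid ((m : ZMod (p ^ n)))
      rw [aeval_natCast_zmod] at h1
      have h2 : ((p ^ n : ℕ) : ℤ) ∣ f.eval (m : ℤ) - (m : ℤ) := by
        apply (ZMod.intCast_zmod_eq_zero_iff_dvd _ _).mp
        rw [Int.cast_sub, h1]
        simp
      push_cast at h2
      have h3 : g.eval (m : ℤ) = f.eval (m : ℤ) - (m : ℤ) := by rw [hfg m]; ring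
      rw [h3]
      exact h2
    have hvc := val_coeff hp (n := n) (N := d + 1) a hdvd
    set c : ℕ → ℤ := fun k => a k / (p : ℤ) ^ (n - alphaP p k) with hcdef
    have hck : ∀ k, k < d + 1 → a k = (p : ℤ) ^ (n - alphaP p k) * c k := fun k hk =>
      (Int.mul_ediv_cancel' (hvc k hk)).symm
    set b : Fin β → ZMod p := fun k => ((c (k : ℕ) : ℤ) : ZMod p) with hbdef
    refine ⟨b, ?_⟩
    apply Subtype.ext
    show (fun x => Polynomial.aeval x (PB p n β (lift b))) = σ
    rw [hσf]
    funext x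
    refine eq_on_zmod (N := p ^ (n + 1)) (fun m => ?_) x
    -- (p^(n+1)) ∣ (PB).eval m - f.eval m
    push_cast
    have hsplit : ∑ k ∈ range (d + 1), a k * (m.descFactorial k : ℤ)
        = (∑ k ∈ range β, a k * (m.descFactorial k : ℤ))
          + ∑ k ∈ Ico β (d + 1), a k * (m.descFactorial k : ℤ) := by
      rw [Finset.range_eq_Ico, Finset.range_eq_Ico]
      exact (Finset.sum_Ico_consecutive _ (Nat.zero_le β) (by omega : β ≤ d + 1)).symm
    have hfeval : f.eval (m : ℤ) = (m : ℤ) + ((∑ k ∈ range β, a k * (m.descFactorial k : ℤ))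
        + ∑ k ∈ Ico β (d + 1), a k * (m.descFactorial k : ℤ)) := by
      rw [hfg m, hEvalg m, hsplit]; ring
    have hdiff : (PB p n β (lift b)).eval (m : ℤ) - f.eval (m : ℤ)
        = (∑ k ∈ range β, (lift b k * (p : ℤ) ^ (n - alphaP p k) - a k) * (m.descFactorial k : ℤ))
          - ∑ k ∈ Ico β (d + 1), a k * (m.descFactorial k : ℤ) := by
      rw [PB_eval_nat, hfeval]
      have h3 : ∑ k ∈ range β, (lift b k * (p : ℤ) ^ (n - alphaP p k) - a k) * (m.descFactorial k : ℤ)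
          = ∑ k ∈ range β, (lift b k * (p : ℤ) ^ (n - alphaP p k) * (m.descFactorial k : ℤ)
              - a k * (m.descFactorial k : ℤ)) :=
        Finset.sum_congr rfl fun k _ => by ring
      rw [h3, Finset.sum_sub_distrib]
      ring
    rw [hdiff]
    apply dvd_sub
    · apply Finset.dvd_sum
      intro k hk
      have hkβ : k < β := Finset.mem_range.mp hk
      have hαk : alphaP p k ≤ n := hα k hkβ
      have hkd : k < d + 1 := by omega
      have hterm : lift b k * (p : ℤ) ^ (n - alphaP p k) - a k
          = (lift b k - c k) * (p : ℤ) ^ (n - alphaP p k) := by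
        rw [hck k hkd]; ring
      have hpdvd : (p : ℤ) ∣ lift b k - c k := by
        have hlb : lift b k = (((b ⟨k, hkβ⟩).val : ℕ) : ℤ) := by
          rw [hlift]; simp only [hkβ, dif_pos]
        apply (ZMod.intCast_zmod_eq_zero_iff_dvd _ _).mp
        rw [Int.cast_sub, hlb]
        push_cast
        rw [ZMod.natCast_rightInverse (b ⟨k, hkβ⟩)]
        rw [hbdef]
        simp [sub_self]
      obtain ⟨w, hw⟩ := hpdvd
      obtain ⟨v, hv⟩ := pow_alpha_dvd_descFactorial (p := p) m k
      rw [hterm, hw, hv]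
      refine dvd_trans (pow_dvd_pow (p : ℤ)
        (by omega : n + 1 ≤ 1 + (n - alphaP p k) + alphaP p k)) ⟨w * v, ?_⟩
      rw [pow_add, pow_add]; ring
    · apply Finset.dvd_sum
      intro k hk
      have hkβ : β ≤ k := (Finset.mem_Ico.mp hk).1
      have hαk : n + 1 ≤ alphaP p k := alpha_ge_beta hp hn hkβ
      obtain ⟨v, hv⟩ := pow_alpha_dvd_descFactorial (p := p) m k
      rw [hv]
      exact Dvd.dvd.mul_left (dvd_trans (pow_dvd_pow (p : ℤ) hαk) ⟨v, rfl⟩) _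
  have hcard := Nat.card_eq_of_bijective e ⟨einj, esurj⟩
  rw [← hcard, Nat.card_eq_fintype_card, Fintype.card_fun, ZMod.card, Fintype.card_fin]
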